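/- Let G be a good labeled simple graph (every 2-path a–x–b with differently labeled edges satisfies l(ax)=b or l(xb)=a, and no edge's label equals one of its endpoints). If a vertex x is incident to edges of exactly 2 different labels, say labels p and q, then one of these labels, say q, appears on exactly one edge incident to x, and the other endpoint of that edge is p. -/
import Mathlib

/-- In a good labeled simple graph, if a vertex `x` is incident to edges of exactly two
different labels `p` and `q`, then one of these labels appears on exactly one edge
incident to `x`, and the other endpoint of this edge is the other label. -/
theorem stmt14 {V : Type*} (Adj : V → V → Prop) (l : V → V → V)
    (hsymm : ∀ a b, Adj a b → Adj b a)
    (hirr : ∀ a, ¬ Adj a a)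
    (hlsymm : ∀ a b, Adj a b → l a b = l b a)
    (hself : ∀ a b, Adj a b → l a b ≠ a ∧ l a b ≠ b)
    (hgood : ∀ a x b, a ≠ b → Adj a x → Adj x b → l a x ≠ l x b →
      l a x = b ∨ l x b = a)
    (x p q : V) (hpq : p ≠ q)
    (hp : ∃ y, Adj x y ∧ l x y = p)
    (hq : ∃ y, Adj x y ∧ l x y = q)
    (honly : ∀ y, Adj x y → l x y = p ∨ l x y = q) :
    (∀ y, Adj x y → l x y = q → y = p) ∨ (∀ y, Adj x y → l x y = p → y = q) := by
  by_contra h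
  push_neg at h
  obtain ⟨⟨z, hz, hzq, hzp⟩, ⟨y, hy, hyp, hyq⟩⟩ := h
  have hyz : y ≠ z := fun h => hpq (by rw [← hyp, h, hzq])
  have hl : l y x ≠ l x z := by
    rw [← hlsymm x y hy, hyp, hzq]; exact hpq
  rcases hgood y x z hyz (hsymm x y hy) hz hl with h1 | h1
  · exact hzp (by rw [← h1, ← hlsymm x y hy, hyp])
  · exact hyq (by rw [← h1, hzq])
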